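/- Let {h_j}_{j∈J} be a Riesz partition of unity on ℝ^d with bounds p and P. For each j define W_j to be the L²-closure of {\bar{h_j} f : f ∈ L²(ℝ^d)}. Suppose for each j, {g_{j,k}}_{k∈K} is a frame for W_j with bounds m_j and M_j, and m := inf_j m_j > 0, M := sup_j M_j < ∞. Then {h_j g_{j,k} : j ∈ J, k ∈ K} is a frame for L²(ℝ^d) with frame bounds pm and PM. -/

import Mathlib

open MeasureTheory Filter Topology
noncomputable section
abbrev Rd (d : ℕ) := Fin d → ℝ
abbrev L2 (d : ℕ) := Lp ℂ 2 (volume : Measure (Rd d))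
/-- `K_Q`: elements of `L²(ℝ^d)` supported (a.e.) in the closure of `Q`. -/
def Ksp {d : ℕ} (Q : Set (Rd d)) : Set (L2 d) :=
  {f | ∀ᵐ x ∂(volume : Measure (Rd d)), x ∉ closure Q → f x = 0}
/-- `g` is a frame for the subset `F` of `L²(ℝ^d)` with bounds `m`, `M`. -/
def IsFrameWith {d : ℕ} {J : Type*} (g : J → L2 d) (F : Set (L2 d)) (m M : ℝ) : Prop :=
  (∀ j, g j ∈ F) ∧
  ∀ f ∈ F, m * ‖f‖ ^ 2 ≤ ∑' j, ‖(inner ℂ f (g j) : ℂ)‖ ^ 2 ∧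
    (∑' j, ‖(inner ℂ f (g j) : ℂ)‖ ^ 2) ≤ M * ‖f‖ ^ 2
/-- `W_j`: the L²-closure of `{conj(h_j) f : f ∈ L²}`. -/
def Wspace {d : ℕ} (hj : Rd d → ℂ) : Set (L2 d) :=
  closure {F : L2 d | ∃ f : L2 d,
    ∀ᵐ x ∂(volume : Measure (Rd d)), F x = (starRingEnd ℂ) (hj x) * f x}
open scoped ENNReal NNReal

lemma enorm_sq_eq {d : ℕ} (F : L2 d) :
    (‖F‖₊ : ℝ≥0∞) ^ 2 = ∫⁻ x, (‖F x‖₊ : ℝ≥0∞) ^ 2 ∂(volume : Measure (Rd d)) := by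
  have h1 : (‖F‖₊ : ℝ≥0∞) = eLpNorm F 2 volume := by
    rw [Lp.nnnorm_def, ENNReal.coe_toNNReal (Lp.eLpNorm_ne_top F)]
  have h2 : ((2 : ℝ≥0∞)).toReal = 2 := by simp
  rw [h1, eLpNorm_eq_lintegral_rpow_enorm_toReal two_ne_zero ENNReal.ofNat_ne_top, h2,
    ← ENNReal.rpow_natCast _ 2, ← ENNReal.rpow_mul]
  norm_num
  rfl

lemma tsum_coe_eq {ι : Type*} (b : ι → ℝ≥0) (hb : Summable (fun i => (b i : ℝ))) :
    ∑' i, (b i : ℝ≥0∞) = ENNReal.ofReal (∑' i, (b i : ℝ)) := by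
  have hb' : Summable b := NNReal.summable_coe.mp hb
  rw [← NNReal.coe_tsum, ENNReal.ofReal_coe_nnreal, ENNReal.coe_tsum hb']


/-- Theorem: if `{h_j}` is an RPU with bounds `p,P` and for each `j`, `{g_{j,k}}_k`
is a frame for `W_j` with bounds `m_j,M_j` with `m = inf m_j > 0`, `M = sup M_j < ∞`,
then `{h_j g_{j,k}}` is a frame for `L²(ℝ^d)` with bounds `pm, PM`. -/
theorem stmt4 {d : ℕ} {J K : Type*} [Countable J] [Countable K]
    (h : J → Rd d → ℂ) (hmeas : ∀ j, Measurable (h j)) (p P : ℝ) (hp : 0 < p)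
    (hRPU : ∀ᵐ x ∂(volume : Measure (Rd d)),
      p ≤ ∑' j, ‖h j x‖ ^ 2 ∧ (∑' j, ‖h j x‖ ^ 2) ≤ P)
    (g : J → K → L2 d) (mj Mj : J → ℝ) (m M : ℝ) (hm : 0 < m)
    (hmj : ∀ j, m ≤ mj j) (hMj : ∀ j, Mj j ≤ M)
    (hframe : ∀ j, IsFrameWith (g j) (Wspace (h j)) (mj j) (Mj j))
    (hg : J × K → L2 d)
    (hhg : ∀ j k, ∀ᵐ x ∂(volume : Measure (Rd d)), hg (j, k) x = h j x * g j k x) :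
    IsFrameWith hg (Set.univ : Set (L2 d)) (p * m) (P * M) := by
  classical
  refine ⟨fun _ => Set.mem_univ _, fun f _ => ?_⟩
  -- trivial case f = 0
  rcases eq_or_ne f 0 with rfl | hf0
  · simp
  -- a.e. summability of the RPU
  have hsumm_h : ∀ᵐ x ∂(volume : Measure (Rd d)), Summable (fun j => ‖h j x‖ ^ 2) := by
    filter_upwards [hRPU] with x hx
    by_contra hs
    rw [tsum_eq_zero_of_not_summable hs] at hx
    linarith [hx.1]
  -- each h j is a.e. bounded by sqrt P
  have hbound : ∀ j, ∀ᵐ x ∂(volume : Measure (Rd d)), ‖h j x‖ ≤ Real.sqrt P := by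
    intro j
    filter_upwards [hRPU, hsumm_h] with x hx hxs
    exact Real.le_sqrt_of_sq_le (le_trans (Summable.le_tsum hxs j fun _ _ => sq_nonneg _) hx.2)
  -- the functions conj (h j) * f are in L2
  have hFmem : ∀ j, MemLp (fun x => (starRingEnd ℂ) (h j x) * f x) 2
      (volume : Measure (Rd d)) := by
    intro j
    refine (Lp.memLp f).of_le_mul (c := Real.sqrt P)
      ((((Complex.continuous_conj.measurable.comp (hmeas j))).aestronglyMeasurable).mul
        (Lp.aestronglyMeasurable f)) ?_
    filter_upwards [hbound j] with x hx
    rw [norm_mul, RCLike.norm_conj]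
    exact mul_le_mul_of_nonneg_right hx (norm_nonneg _)
  set Fj : J → L2 d := fun j => (hFmem j).toLp _ with hFjdef
  have hFjcoe : ∀ j, ∀ᵐ x ∂(volume : Measure (Rd d)),
      Fj j x = (starRingEnd ℂ) (h j x) * f x := fun j => (hFmem j).coeFn_toLp
  have hFjW : ∀ j, Fj j ∈ Wspace (h j) := fun j => subset_closure ⟨f, hFjcoe j⟩
  -- inner products agree
  have hinner : ∀ j k, (inner ℂ f (hg (j, k)) : ℂ) = inner ℂ (Fj j) (g j k) := by
    intro j k
    rw [L2.inner_def, L2.inner_def]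
    refine integral_congr_ae ?_
    filter_upwards [hhg j k, hFjcoe j] with x hx1 hx2
    simp only [RCLike.inner_apply, hx1, hx2, map_mul, RingHomCompTriple.comp_apply,
      RingHom.id_apply, Complex.conj_conj]
    ring
  -- real frame bounds for Fj j
  have hfr : ∀ j, mj j * ‖Fj j‖ ^ 2 ≤ ∑' k, ‖(inner ℂ (Fj j) (g j k) : ℂ)‖ ^ 2 ∧
      (∑' k, ‖(inner ℂ (Fj j) (g j k) : ℂ)‖ ^ 2) ≤ Mj j * ‖Fj j‖ ^ 2 :=
    fun j => (hframe j).2 (Fj j) (hFjW j)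
  -- summability in k for each j
  set a : J → K → ℝ≥0 := fun j k => ‖(inner ℂ (Fj j) (g j k) : ℂ)‖₊ ^ 2 with hadef
  have hacoe : ∀ j k, ((a j k : ℝ)) = ‖(inner ℂ (Fj j) (g j k) : ℂ)‖ ^ 2 := by
    intro j k; simp [hadef]
  have hsa : ∀ j, Summable fun k => ((a j k : ℝ)) := by
    intro j
    by_contra hs
    have h0 : (∑' k, ‖(inner ℂ (Fj j) (g j k) : ℂ)‖ ^ 2) = 0 := by
      refine tsum_eq_zero_of_not_summable ?_
      simpa only [hacoe] using hs
    have h1 := (hfr j).1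
    rw [h0] at h1
    have hmj' : 0 < mj j := lt_of_lt_of_le hm (hmj j)
    have this : Fj j = 0 := by
      by_contra hne
      have hpos : 0 < ‖Fj j‖ ^ 2 := pow_pos (norm_pos_iff.mpr hne) 2
      nlinarith
    refine hs ?_
    have : ∀ k, ((a j k : ℝ)) = 0 := by
      intro k; rw [hacoe, this]; simp
    simpa [funext this] using summable_zero
  -- ENNReal per-j sums
  have htj : ∀ j, ∑' k, (a j k : ℝ≥0∞) = ENNReal.ofReal (∑' k, ‖(inner ℂ (Fj j) (g j k) : ℂ)‖ ^ 2) := by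
    intro j
    rw [tsum_coe_eq _ (hsa j)]
    congr 1
  -- derive 0 ≤ M later; first the Σ_j ‖Fj j‖² computation
  have hFmeas : AEMeasurable (fun x => (‖f x‖₊ : ℝ≥0∞) ^ 2) (volume : Measure (Rd d)) :=
    ((Lp.aestronglyMeasurable f).enorm).pow_const 2
  have hSj : ∀ j, (‖Fj j‖₊ : ℝ≥0∞) ^ 2
      = ∫⁻ x, (‖h j x‖₊ : ℝ≥0∞) ^ 2 * (‖f x‖₊ : ℝ≥0∞) ^ 2 ∂(volume : Measure (Rd d)) := by
    intro j
    rw [enorm_sq_eq]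
    refine lintegral_congr_ae ?_
    filter_upwards [hFjcoe j] with x hx
    rw [hx]
    simp [nnnorm_mul, mul_pow, ENNReal.coe_mul, RCLike.nnnorm_conj]
  have hSig : ∑' j, (‖Fj j‖₊ : ℝ≥0∞) ^ 2
      = ∫⁻ x, (∑' j, (‖h j x‖₊ : ℝ≥0∞) ^ 2) * (‖f x‖₊ : ℝ≥0∞) ^ 2 ∂(volume : Measure (Rd d)) := by
    simp_rw [hSj]
    rw [← lintegral_tsum]
    · refine lintegral_congr fun x => ?_
      rw [ENNReal.tsum_mul_right]
    · intro j
      exact ((((hmeas j).nnnorm).coe_nnreal_ennreal.pow_const 2).aemeasurable).mul hFmeas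
  have hptw : ∀ᵐ x ∂(volume : Measure (Rd d)),
      ENNReal.ofReal p ≤ ∑' j, (‖h j x‖₊ : ℝ≥0∞) ^ 2 ∧
      (∑' j, (‖h j x‖₊ : ℝ≥0∞) ^ 2) ≤ ENNReal.ofReal P := by
    filter_upwards [hRPU, hsumm_h] with x hx hxs
    have he : ∑' j, ((‖h j x‖₊ ^ 2 : ℝ≥0) : ℝ≥0∞) = ENNReal.ofReal (∑' j, ‖h j x‖ ^ 2) := by
      rw [tsum_coe_eq]
      · congr 1
      · simpa using hxs
    constructor
    · calc ENNReal.ofReal p ≤ ENNReal.ofReal (∑' j, ‖h j x‖ ^ 2) :=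
            ENNReal.ofReal_le_ofReal hx.1
        _ = _ := by rw [← he]; exact tsum_congr fun j => by push_cast; ring
    · calc (∑' j, (‖h j x‖₊ : ℝ≥0∞) ^ 2) = ∑' j, ((‖h j x‖₊ ^ 2 : ℝ≥0) : ℝ≥0∞) :=
            tsum_congr fun j => by push_cast; ring
        _ ≤ ENNReal.ofReal P := he ▸ ENNReal.ofReal_le_ofReal hx.2
  have hSiglow : ENNReal.ofReal p * (‖f‖₊ : ℝ≥0∞) ^ 2 ≤ ∑' j, (‖Fj j‖₊ : ℝ≥0∞) ^ 2 := by
    rw [hSig, enorm_sq_eq, ← lintegral_const_mul' _ _ ENNReal.ofReal_ne_top]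
    refine lintegral_mono_ae ?_
    filter_upwards [hptw] with x hx
    exact mul_le_mul_left hx.1 _
  have hSighigh : (∑' j, (‖Fj j‖₊ : ℝ≥0∞) ^ 2) ≤ ENNReal.ofReal P * (‖f‖₊ : ℝ≥0∞) ^ 2 := by
    rw [hSig, enorm_sq_eq, ← lintegral_const_mul' _ _ ENNReal.ofReal_ne_top]
    refine lintegral_mono_ae ?_
    filter_upwards [hptw] with x hx
    exact mul_le_mul_left hx.2 _
  -- 0 < M
  have hM0 : 0 < M := by
    have hne : ∃ j, Fj j ≠ 0 := by
      by_contra h0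
      push_neg at h0
      have : ∑' j, (‖Fj j‖₊ : ℝ≥0∞) ^ 2 = 0 := by
        simp [h0]
      rw [this] at hSiglow
      have h1 : ENNReal.ofReal p * (‖f‖₊ : ℝ≥0∞) ^ 2 ≠ 0 := by
        apply mul_ne_zero
        · simpa [ENNReal.ofReal_eq_zero, not_le] using hp
        · exact pow_ne_zero 2 (ENNReal.coe_ne_zero.mpr (nnnorm_ne_zero_iff.mpr hf0))
      exact h1 (le_antisymm hSiglow zero_le)
    obtain ⟨j, hj⟩ := hne
    have hnorm : 0 < ‖Fj j‖ ^ 2 := pow_pos (norm_pos_iff.mpr hj) 2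
    have h1 := (hfr j).1
    have h2 := (hfr j).2
    have hmj' : 0 < mj j := lt_of_lt_of_le hm (hmj j)
    have : 0 < Mj j := by nlinarith
    exact lt_of_lt_of_le this (hMj j)
  -- per-j ENNReal bounds
  have hlowj : ∀ j, ENNReal.ofReal m * (‖Fj j‖₊ : ℝ≥0∞) ^ 2 ≤ ∑' k, (a j k : ℝ≥0∞) := by
    intro j
    rw [htj j]
    have : ENNReal.ofReal m * (‖Fj j‖₊ : ℝ≥0∞) ^ 2 = ENNReal.ofReal (m * ‖Fj j‖ ^ 2) := by
      rw [ENNReal.ofReal_mul hm.le]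
      congr 1
      rw [← enorm_eq_nnnorm, ← ofReal_norm, ← ENNReal.ofReal_pow (norm_nonneg _)]
    rw [this]
    refine ENNReal.ofReal_le_ofReal ?_
    calc m * ‖Fj j‖ ^ 2 ≤ mj j * ‖Fj j‖ ^ 2 :=
          mul_le_mul_of_nonneg_right (hmj j) (sq_nonneg _)
      _ ≤ _ := (hfr j).1
  have hhighj : ∀ j, (∑' k, (a j k : ℝ≥0∞)) ≤ ENNReal.ofReal M * (‖Fj j‖₊ : ℝ≥0∞) ^ 2 := by
    intro j
    rw [htj j]
    have : ENNReal.ofReal M * (‖Fj j‖₊ : ℝ≥0∞) ^ 2 = ENNReal.ofReal (M * ‖Fj j‖ ^ 2) := by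
      rw [ENNReal.ofReal_mul hM0.le]
      congr 1
      rw [← enorm_eq_nnnorm, ← ofReal_norm, ← ENNReal.ofReal_pow (norm_nonneg _)]
    rw [this]
    refine ENNReal.ofReal_le_ofReal ?_
    calc (∑' k, ‖(inner ℂ (Fj j) (g j k) : ℂ)‖ ^ 2) ≤ Mj j * ‖Fj j‖ ^ 2 := (hfr j).2
      _ ≤ M * ‖Fj j‖ ^ 2 := mul_le_mul_of_nonneg_right (hMj j) (sq_nonneg _)
  -- the total ENNReal sum
  set A : J × K → ℝ≥0 := fun jk => ‖(inner ℂ f (hg jk) : ℂ)‖₊ ^ 2 with hAdef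
  have hAa : ∀ jk : J × K, A jk = a jk.1 jk.2 := by
    rintro ⟨j, k⟩
    simp only [hAdef, hadef, hinner j k]
  have hT : ∑' jk : J × K, (A jk : ℝ≥0∞) = ∑' j, ∑' k, (a j k : ℝ≥0∞) := by
    rw [ENNReal.tsum_prod']
    exact tsum_congr fun j => tsum_congr fun k => by rw [hAa (j, k)]
  have hTlow : ENNReal.ofReal (p * m) * (‖f‖₊ : ℝ≥0∞) ^ 2 ≤ ∑' jk : J × K, (A jk : ℝ≥0∞) := by
    rw [hT]
    calc ENNReal.ofReal (p * m) * (‖f‖₊ : ℝ≥0∞) ^ 2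
        = ENNReal.ofReal m * (ENNReal.ofReal p * (‖f‖₊ : ℝ≥0∞) ^ 2) := by
          rw [ENNReal.ofReal_mul hp.le]; ring
      _ ≤ ENNReal.ofReal m * ∑' j, (‖Fj j‖₊ : ℝ≥0∞) ^ 2 := mul_le_mul_right hSiglow _
      _ = ∑' j, ENNReal.ofReal m * (‖Fj j‖₊ : ℝ≥0∞) ^ 2 := ENNReal.tsum_mul_left.symm
      _ ≤ _ := ENNReal.tsum_le_tsum hlowj
  have hP0 : 0 < P := by
    obtain ⟨x, hx1, hx2⟩ := hRPU.exists
    linarith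
  have hThigh : (∑' jk : J × K, (A jk : ℝ≥0∞)) ≤ ENNReal.ofReal (P * M) * (‖f‖₊ : ℝ≥0∞) ^ 2 := by
    rw [hT]
    calc (∑' j, ∑' k, (a j k : ℝ≥0∞)) ≤ ∑' j, ENNReal.ofReal M * (‖Fj j‖₊ : ℝ≥0∞) ^ 2 :=
          ENNReal.tsum_le_tsum hhighj
      _ = ENNReal.ofReal M * ∑' j, (‖Fj j‖₊ : ℝ≥0∞) ^ 2 := ENNReal.tsum_mul_left
      _ ≤ ENNReal.ofReal M * (ENNReal.ofReal P * (‖f‖₊ : ℝ≥0∞) ^ 2) := mul_le_mul_right hSighigh _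
      _ = ENNReal.ofReal (P * M) * (‖f‖₊ : ℝ≥0∞) ^ 2 := by
          rw [ENNReal.ofReal_mul hP0.le]; ring
  -- finiteness and conversion back to ℝ
  have hfin : (∑' jk : J × K, (A jk : ℝ≥0∞)) ≠ ⊤ := by
    refine ne_top_of_le_ne_top ?_ hThigh
    exact ENNReal.mul_ne_top ENNReal.ofReal_ne_top (ENNReal.pow_ne_top ENNReal.coe_ne_top)
  have hAsum : Summable A := ENNReal.tsum_coe_ne_top_iff_summable.mp hfin
  have hgoalsum : (∑' jk : J × K, ‖(inner ℂ f (hg jk) : ℂ)‖ ^ 2)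
      = (∑' jk : J × K, (A jk : ℝ≥0∞)).toReal := by
    rw [← ENNReal.coe_tsum hAsum, ENNReal.coe_toReal, NNReal.coe_tsum]
    exact tsum_congr fun jk => by simp [hAdef]
  have hnf : ((‖f‖₊ : ℝ≥0∞) ^ 2).toReal = ‖f‖ ^ 2 := by
    rw [ENNReal.toReal_pow, ENNReal.coe_toReal, coe_nnnorm]
  constructor
  · have := ENNReal.toReal_mono hfin hTlow
    rw [hgoalsum]
    calc p * m * ‖f‖ ^ 2
        = (ENNReal.ofReal (p * m) * (‖f‖₊ : ℝ≥0∞) ^ 2).toReal := by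
          rw [ENNReal.toReal_mul, hnf, ENNReal.toReal_ofReal (by positivity)]
      _ ≤ _ := this
  · have hRfin : ENNReal.ofReal (P * M) * (‖f‖₊ : ℝ≥0∞) ^ 2 ≠ ⊤ :=
      ENNReal.mul_ne_top ENNReal.ofReal_ne_top (ENNReal.pow_ne_top ENNReal.coe_ne_top)
    have := ENNReal.toReal_mono hRfin hThigh
    rw [hgoalsum]
    calc (∑' jk : J × K, (A jk : ℝ≥0∞)).toReal ≤ _ := this
      _ = P * M * ‖f‖ ^ 2 := by
          rw [ENNReal.toReal_mul, hnf, ENNReal.toReal_ofReal (by positivity)]
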